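/- Let C_A, C_{A₁}, C_{A₂}, … be bivariate Extreme Value copulas with Pickands dependence functions A, A₁, A₂, …, respectively. Then C_{A_n}(x,y) → C_A(x,y) for all x,y ∈ [0,1] if, and only if, A_n(x) → A(x) for all x ∈ [0,1] (equivalently, if and only if A_n → A uniformly on [0,1]). -/
import Mathlib

open MeasureTheory Filter Set
open scoped ENNReal

noncomputable section

/-- Right-hand derivative (of a convex function on `[0,1]`) of `f` at `x`, realized as the
infimum of the forward difference quotients with right endpoint in `(x, 1]`. -/
noncomputable def rightD (f : ℝ → ℝ) (x : ℝ) : ℝ :=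
  sInf ((fun y => (f y - f x) / (y - x)) '' Set.Ioc x 1)

/-- `A` is a Pickands dependence function: convex on `[0,1]`, `A 0 = A 1 = 1` and
`max (1−x) x ≤ A x ≤ 1` on `[0,1]`. -/
def IsPickands (A : ℝ → ℝ) : Prop :=
  ConvexOn ℝ (Set.Icc (0:ℝ) 1) A ∧ A 0 = 1 ∧ A 1 = 1 ∧
    ∀ x ∈ Set.Icc (0:ℝ) 1, max (1 - x) x ≤ A x ∧ A x ≤ 1

/-- The Extreme Value copula induced by the Pickands dependence function `A`:
`C_A(x,y) = (xy)^{A(log x / log(xy))}` for `x,y ∈ (0,1)` and `C_A(x,y) = xy` otherwise. -/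
noncomputable def evCopula (A : ℝ → ℝ) (x y : ℝ) : ℝ :=
  if (0 < x ∧ x < 1) ∧ (0 < y ∧ y < 1) then
    (x * y) ^ A (Real.log x / Real.log (x * y))
  else x * y

/-- The set `Cont(D⁺A)` of continuity points of `D⁺A` in `(0,1)`. -/
def ContDA (A : ℝ → ℝ) : Set ℝ :=
  {x | x ∈ Set.Ioo (0:ℝ) 1 ∧ ContinuousAt (rightD A) x}

/-- The Markov kernel (as conditional distribution function `(x,y) ↦ K_{C_A}(x,[0,y])`) of
the Extreme Value copula induced by `A`. -/
noncomputable def evKernel (A : ℝ → ℝ) (x y : ℝ) : ℝ :=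
  if 0 < x ∧ x < 1 then
    if 0 < y ∧ y < 1 then
      evCopula A x y *
        (rightD A (Real.log x / Real.log (x * y)) * Real.log y / (x * Real.log (x * y))
          + A (Real.log x / Real.log (x * y)) / x)
    else y
  else 1

/-- The metric `D₁` between two copulas, expressed via their conditional distribution
functions `K₁, K₂` (with `Kᵢ x y = K_{Cᵢ}(x,[0,y])`). -/
noncomputable def D1 (K1 K2 : ℝ → ℝ → ℝ) : ℝ :=
  ∫ y in Set.Icc (0:ℝ) 1, ∫ x in Set.Icc (0:ℝ) 1, |K1 x y - K2 x y|

/-- Conditional distribution function of the independence copula `Π`. -/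
def piKernel : ℝ → ℝ → ℝ := fun _ y => y

/-- Dependence measure `ζ₁(C) = 3 D₁(C, Π)`. -/
noncomputable def zeta1 (K : ℝ → ℝ → ℝ) : ℝ := 3 * D1 K piKernel

/-- Dependence measure `r(C) = 6 ∫∫ K_C(x,[0,y])² dλ(x) dλ(y) − 2`. -/
noncomputable def rdep (K : ℝ → ℝ → ℝ) : ℝ :=
  6 * (∫ y in Set.Icc (0:ℝ) 1, ∫ x in Set.Icc (0:ℝ) 1, (K x y) ^ 2) - 2

/-- Weak conditional convergence of a sequence of copulas, in terms of their conditional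
distribution functions: for λ-a.e. `x ∈ [0,1]` the measures `K_{C_n}(x,·)` converge weakly
to `K_C(x,·)`, i.e. the conditional distribution functions converge at every continuity
point of `y ↦ K_C(x,[0,y])` in `[0,1]`. -/
def WeakCondConv (Kseq : ℕ → ℝ → ℝ → ℝ) (K : ℝ → ℝ → ℝ) : Prop :=
  ∀ᵐ x ∂(volume.restrict (Set.Icc (0:ℝ) 1)),
    ∀ y ∈ Set.Icc (0:ℝ) 1, ContinuousWithinAt (fun t => K x t) (Set.Icc 0 1) y →
      Filter.Tendsto (fun n => Kseq n x y) Filter.atTop (nhds (K x y))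

/-- Every Pickands dependence function is 1-Lipschitz on `[0,1]`. -/
lemma pickands_lip {A : ℝ → ℝ} (hA : IsPickands A) :
    ∀ x ∈ Set.Icc (0:ℝ) 1, ∀ y ∈ Set.Icc (0:ℝ) 1, |A x - A y| ≤ |x - y| := by
  obtain ⟨hconv, h0, h1, hb⟩ := hA
  have key : ∀ x ∈ Set.Icc (0:ℝ) 1, ∀ y ∈ Set.Icc (0:ℝ) 1, x < y → |A y - A x| ≤ y - x := by
    intro x hx y hy hxy
    have hbx := hb x hx
    have hby := hb y hy
    have hAxx : x ≤ A x := le_trans (le_max_right _ _) hbx.1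
    have hAyy : y ≤ A y := le_trans (le_max_right _ _) hby.1
    have hAx1 : 1 - x ≤ A x := le_trans (le_max_left _ _) hbx.1
    have hAy1 : 1 - y ≤ A y := le_trans (le_max_left _ _) hby.1
    have hub : A y - A x ≤ y - x := by
      rcases eq_or_lt_of_le hy.2 with h | h
      · rw [h, h1]; linarith
      · have hs := hconv.slope_mono_adjacent hx (by simp : (1:ℝ) ∈ Set.Icc (0:ℝ) 1) hxy h
        rw [h1] at hs
        have h2 : (1 - A y) / (1 - y) ≤ 1 := by
          rw [div_le_one (by linarith)]; linarith
        have h3 : (A y - A x) / (y - x) ≤ 1 := le_trans hs h2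
        have := (div_le_one (by linarith : (0:ℝ) < y - x)).mp h3
        linarith
    have hlb : -(y - x) ≤ A y - A x := by
      rcases eq_or_lt_of_le hx.1 with h | h
      · rw [← h, h0]; linarith
      · have hs := hconv.slope_mono_adjacent (by simp : (0:ℝ) ∈ Set.Icc (0:ℝ) 1) hy h hxy
        rw [h0] at hs
        have h2 : (-1 : ℝ) ≤ (A x - 1) / (x - 0) := by
          rw [le_div_iff₀ (by linarith)]; linarith
        have h3 : (-1 : ℝ) ≤ (A y - A x) / (y - x) := le_trans h2 hs
        have := (le_div_iff₀ (by linarith : (0:ℝ) < y - x)).mp h3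
        linarith
    exact abs_le.mpr ⟨by linarith, hub⟩
  intro x hx y hy
  rcases lt_trichotomy x y with h | h | h
  · rw [abs_sub_comm, abs_sub_comm x y, abs_of_pos (by linarith : (0:ℝ) < y - x)]
    exact key x hx y hy h
  · simp [h]
  · rw [abs_of_pos (by linarith : (0:ℝ) < x - y)]
    exact key y hy x hx h

/-- Value of the EV copula along the diagonal curve `(e^{-t}, e^{-(1-t)})`. -/
lemma evCopula_exp (B : ℝ → ℝ) {t : ℝ} (ht0 : 0 < t) (ht1 : t < 1) :
    evCopula B (Real.exp (-t)) (Real.exp (-(1 - t))) = Real.exp (-(B t)) := by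
  have hx1 : Real.exp (-t) < 1 := Real.exp_lt_one_iff.mpr (by linarith)
  have hy1 : Real.exp (-(1 - t)) < 1 := Real.exp_lt_one_iff.mpr (by linarith)
  have hxy : Real.exp (-t) * Real.exp (-(1 - t)) = Real.exp (-1) := by
    rw [← Real.exp_add]; congr 1; ring
  rw [evCopula, if_pos ⟨⟨Real.exp_pos _, hx1⟩, ⟨Real.exp_pos _, hy1⟩⟩, hxy,
    Real.log_exp, Real.log_exp, show (-t) / (-1 : ℝ) = t by field_simp,
    Real.rpow_def_of_pos (Real.exp_pos _), Real.log_exp]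
  congr 1; ring

/-- For Extreme Value copulas, pointwise convergence of the copulas on
`[0,1]²` is equivalent to pointwise convergence of the Pickands dependence functions on
`[0,1]`, which in turn is equivalent to their uniform convergence on `[0,1]`. -/
theorem stmt14 (A : ℝ → ℝ) (Aseq : ℕ → ℝ → ℝ)
    (hA : IsPickands A) (hAseq : ∀ n, IsPickands (Aseq n)) :
    ((∀ x ∈ Set.Icc (0:ℝ) 1, ∀ y ∈ Set.Icc (0:ℝ) 1,
        Filter.Tendsto (fun n => evCopula (Aseq n) x y) Filter.atTop
          (nhds (evCopula A x y)))
      ↔ (∀ x ∈ Set.Icc (0:ℝ) 1,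
          Filter.Tendsto (fun n => Aseq n x) Filter.atTop (nhds (A x)))) ∧
    ((∀ x ∈ Set.Icc (0:ℝ) 1,
        Filter.Tendsto (fun n => Aseq n x) Filter.atTop (nhds (A x)))
      ↔ TendstoUniformlyOn (fun n => Aseq n) A Filter.atTop (Set.Icc (0:ℝ) 1)) := by
  constructor
  · constructor
    · -- copula convergence → pointwise convergence of Pickands functions
      intro h t ht
      rcases eq_or_lt_of_le ht.1 with h0 | h0
      · have e : (fun n => Aseq n t) = fun _ => (1:ℝ) :=
          funext fun n => by rw [← h0]; exact (hAseq n).2.1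
        rw [e, ← h0, hA.2.1]; exact tendsto_const_nhds
      rcases eq_or_lt_of_le ht.2 with h1 | h1
      · have e : (fun n => Aseq n t) = fun _ => (1:ℝ) :=
          funext fun n => by rw [h1]; exact (hAseq n).2.2.1
        rw [e, h1, hA.2.2.1]; exact tendsto_const_nhds
      · have hx1 : Real.exp (-t) < 1 := Real.exp_lt_one_iff.mpr (by linarith)
        have hy1 : Real.exp (-(1 - t)) < 1 := Real.exp_lt_one_iff.mpr (by linarith)
        have hcop := h (Real.exp (-t)) ⟨(Real.exp_pos _).le, hx1.le⟩
          (Real.exp (-(1 - t))) ⟨(Real.exp_pos _).le, hy1.le⟩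
        have e : (fun n => evCopula (Aseq n) (Real.exp (-t)) (Real.exp (-(1 - t))))
            = fun n => Real.exp (-(Aseq n t)) :=
          funext fun n => evCopula_exp (Aseq n) h0 h1
        rw [e, evCopula_exp A h0 h1] at hcop
        have hlog := (Real.continuousAt_log (Real.exp_pos (-(A t))).ne').tendsto.comp hcop
        simp only [Function.comp_def, Real.log_exp] at hlog
        have := hlog.neg
        simpa using this
    · -- pointwise convergence of Pickands functions → copula convergence
      intro h x hx y hy
      by_cases hc : (0 < x ∧ x < 1) ∧ (0 < y ∧ y < 1)
      · have hlx : Real.log x < 0 := Real.log_neg hc.1.1 hc.1.2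
        have hly : Real.log y < 0 := Real.log_neg hc.2.1 hc.2.2
        have hlxy : Real.log (x * y) = Real.log x + Real.log y :=
          Real.log_mul hc.1.1.ne' hc.2.1.ne'
        have htmem : Real.log x / Real.log (x * y) ∈ Set.Icc (0:ℝ) 1 := by
          rw [hlxy]
          constructor
          · exact div_nonneg_iff.mpr (Or.inr ⟨hlx.le, by linarith⟩)
          · rw [div_le_one_iff]; exact Or.inr (Or.inr ⟨by linarith, by linarith⟩)
        have hAt := h _ htmem
        have hxy0 : 0 < x * y := mul_pos hc.1.1 hc.2.1
        have hcont := (Real.continuousAt_const_rpow (a := x * y) hxy0.ne').tendsto.comp hAt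
        simp only [evCopula, if_pos hc]
        exact hcont
      · simp only [evCopula, if_neg hc]
        exact tendsto_const_nhds
  · constructor
    · -- pointwise → uniform, via equi-Lipschitz + finite grid
      intro h
      rw [Metric.tendstoUniformlyOn_iff]
      intro ε hε
      obtain ⟨N, hN⟩ := exists_nat_gt (3 / ε)
      have hN0 : (0:ℝ) < N := lt_trans (div_pos (by norm_num) hε) hN
      have h13 : 1 / (N:ℝ) < ε / 3 := by
        rw [div_lt_div_iff₀ hN0 (by norm_num)]
        nlinarith [(div_lt_iff₀ hε).mp hN]
      have hgrid : ∀ᶠ n in atTop,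
          ∀ i ∈ Finset.range (N + 1), |Aseq n ((i:ℝ)/N) - A ((i:ℝ)/N)| < ε / 3 := by
        rw [Finset.eventually_all]
        intro i hi
        have hiN : (i:ℝ) ≤ N := by
          exact_mod_cast Nat.lt_succ_iff.mp (Finset.mem_range.mp hi)
        have hmem : (i:ℝ)/N ∈ Set.Icc (0:ℝ) 1 :=
          ⟨div_nonneg (Nat.cast_nonneg i) hN0.le, (div_le_one hN0).mpr hiN⟩
        have := Metric.tendsto_nhds.mp (h _ hmem) (ε / 3) (by positivity)
        simpa [Real.dist_eq] using this
      filter_upwards [hgrid] with n hn x hx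
      set i := (⌊x * N⌋).toNat with hidef
      have hfl0 : (0:ℤ) ≤ ⌊x * N⌋ := Int.floor_nonneg.mpr (mul_nonneg hx.1 hN0.le)
      have hieq : ((i:ℝ)) = ((⌊x * N⌋ : ℤ) : ℝ) := by
        exact_mod_cast Int.toNat_of_nonneg hfl0
      have hi1 : (i:ℝ) ≤ x * N := by rw [hieq]; exact Int.floor_le _
      have hi2 : x * N < (i:ℝ) + 1 := by rw [hieq]; exact Int.lt_floor_add_one _
      have hiN : (i:ℝ) ≤ N := by nlinarith [hx.2]
      set t := (i:ℝ)/N with htdef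
      have htmem : t ∈ Set.Icc (0:ℝ) 1 :=
        ⟨div_nonneg (Nat.cast_nonneg i) hN0.le, (div_le_one hN0).mpr hiN⟩
      have htx : t ≤ x := by rw [htdef]; exact (div_le_iff₀ hN0).mpr hi1
      have hxt : x - t < 1 / N := by
        have hlt : x < ((i:ℝ) + 1) / N := (lt_div_iff₀ hN0).mpr (by linarith)
        rw [add_div] at hlt
        rw [htdef]; linarith
      have hmemi : i ∈ Finset.range (N + 1) := by
        refine Finset.mem_range.mpr (Nat.lt_succ_iff.mpr ?_)
        exact_mod_cast hiN
      have hg := hn i hmemi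
      have l1 := pickands_lip hA x hx t htmem
      have l2 := pickands_lip (hAseq n) t htmem x hx
      have habs : |x - t| < ε / 3 := by
        rw [abs_of_nonneg (by linarith)]; linarith
      have h1 : |A x - A t| < ε / 3 := lt_of_le_of_lt l1 habs
      have h2 : |A t - Aseq n t| < ε / 3 := by rw [abs_sub_comm]; exact hg
      have h3 : |Aseq n t - Aseq n x| < ε / 3 :=
        lt_of_le_of_lt l2 (by rw [abs_sub_comm] at habs; exact habs)
      rw [Real.dist_eq]
      calc |A x - Aseq n x|
          ≤ |A x - A t| + |A t - Aseq n x| := abs_sub_le _ _ _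
        _ ≤ |A x - A t| + (|A t - Aseq n t| + |Aseq n t - Aseq n x|) := by
            linarith [abs_sub_le (A t) (Aseq n t) (Aseq n x)]
        _ < ε := by linarith
    · intro h x hx
      exact h.tendsto_at hx
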